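/- Let x ∈ A^ℤ be a bi-infinite word and φ : A* → B* a return morphism for a nonempty word w. If Γ = [n, n+k] (an integer interval) is a string attractor of φ(x), then there exist m ∈ ℤ and ℓ ≥ 0 such that φ_x^{-1}(Γ) = [m, m+ℓ], and the interval [m, m+ℓ+|w|] is a string attractor of x. -/

import Mathlib

open scoped ENat Classical

/-- The length-`n` factor of the bi-infinite word `x` starting at position `i`. -/
def subwordZ {A : Type*} (x : ℤ → A) (i : ℤ) (n : ℕ) : List A :=
  (List.range n).map fun j => x (i + (j : ℤ))

/-- `w` occurs in `x` at position `i`. -/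
def occursAt {A : Type*} (x : ℤ → A) (w : List A) (i : ℤ) : Prop :=
  subwordZ x i w.length = w

/-- `w` is a factor of the bi-infinite word `x`. -/
def IsFactorZ {A : Type*} (x : ℤ → A) (w : List A) : Prop :=
  ∃ i : ℤ, occursAt x w i

/-- `Γ` is a string attractor of the bi-infinite word `x`: every nonempty factor
has an occurrence crossing a position of `Γ`. -/
def IsAttractorZ {A : Type*} (x : ℤ → A) (Γ : Set ℤ) : Prop :=
  ∀ w : List A, w ≠ [] → IsFactorZ x w →
    ∃ i : ℤ, occursAt x w i ∧ ∃ p ∈ Γ, i ≤ p ∧ p < i + (w.length : ℤ)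

/-- The span `sup Γ - inf Γ` of a set of integers (`⊤` when unbounded). -/
noncomputable def setSpan (Γ : Set ℤ) : ℕ∞ :=
  ⨆ a ∈ Γ, ⨆ b ∈ Γ, ((b - a).toNat : ℕ∞)

/-- The string attractor span of a bi-infinite word. -/
noncomputable def wordSpan {A : Type*} (x : ℤ → A) : ℕ∞ :=
  ⨅ Γ ∈ {Γ : Set ℤ | IsAttractorZ x Γ}, setSpan Γ

/-- The factor complexity of a bi-infinite word. -/
noncomputable def complexityZ {A : Type*} (x : ℤ → A) (n : ℕ) : ℕ :=
  Nat.card {w : List A // w.length = n ∧ IsFactorZ x w}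

/-- The shift `S^k`. -/
def shiftZ {A : Type*} (k : ℤ) (x : ℤ → A) : ℤ → A := fun i => x (i + k)

def PositivelyPeriodicZ {A : Type*} (x : ℤ → A) : Prop :=
  ∃ (N : ℤ) (p : ℕ), 1 ≤ p ∧ ∀ n : ℤ, N ≤ n → x n = x (n + (p : ℤ))

def NegativelyPeriodicZ {A : Type*} (x : ℤ → A) : Prop :=
  ∃ (N : ℤ) (p : ℕ), 1 ≤ p ∧ ∀ n : ℤ, n ≤ N → x n = x (n - (p : ℤ))

def EventuallyPeriodicZ {A : Type*} (x : ℤ → A) : Prop :=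
  PositivelyPeriodicZ x ∨ NegativelyPeriodicZ x

def AperiodicZ {A : Type*} (x : ℤ → A) : Prop := ¬ EventuallyPeriodicZ x

def PurelyPeriodicZ {A : Type*} (x : ℤ → A) : Prop :=
  ∃ p : ℕ, 1 ≤ p ∧ ∀ n : ℤ, x n = x (n + (p : ℤ))

def LeftSpecialZ {A : Type*} (x : ℤ → A) (u : List A) : Prop :=
  ∃ a b : A, a ≠ b ∧ IsFactorZ x (a :: u) ∧ IsFactorZ x (b :: u)

def RightSpecialZ {A : Type*} (x : ℤ → A) (u : List A) : Prop :=
  ∃ a b : A, a ≠ b ∧ IsFactorZ x (u ++ [a]) ∧ IsFactorZ x (u ++ [b])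

def BispecialZ {A : Type*} (x : ℤ → A) (u : List A) : Prop :=
  LeftSpecialZ x u ∧ RightSpecialZ x u

/-- A bi-infinite word over `{0,1}` is Sturmian if it is aperiodic with complexity `n + 1`. -/
def SturmianZ (x : ℤ → Fin 2) : Prop :=
  AperiodicZ x ∧ ∀ n : ℕ, complexityZ x n = n + 1

/-- `x_{[-n, n+1]} = r_n(x) 01 l_n(x)` for all `n`. -/
def UpperCharacteristic (x : ℤ → Fin 2) : Prop :=
  SturmianZ x ∧ ∀ n : ℕ, ∃ r l : List (Fin 2),
    r.length = n ∧ RightSpecialZ x r ∧ l.length = n ∧ LeftSpecialZ x l ∧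
    subwordZ x (-(n : ℤ)) (2 * n + 2) = r ++ [0, 1] ++ l

/-- `x_{[-n, n+1]} = r_n(x) 10 l_n(x)` for all `n`. -/
def LowerCharacteristic (x : ℤ → Fin 2) : Prop :=
  SturmianZ x ∧ ∀ n : ℕ, ∃ r l : List (Fin 2),
    r.length = n ∧ RightSpecialZ x r ∧ l.length = n ∧ LeftSpecialZ x l ∧
    subwordZ x (-(n : ℤ)) (2 * n + 2) = r ++ [1, 0] ++ l

def CharacteristicSturmian (x : ℤ → Fin 2) : Prop :=
  UpperCharacteristic x ∨ LowerCharacteristic x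

def QuasiSturmianZ {A : Type*} (x : ℤ → A) : Prop :=
  AperiodicZ x ∧ ∃ (n₀ k : ℕ), 1 ≤ k ∧ ∀ n : ℕ, n₀ ≤ n → complexityZ x n = n + k

/-- Starting position in `φ(x)` of the image `φ(x_i)` (image of `x_0` starts at `0`). -/
def blockStart {A B : Type*} (φ : A → List B) (x : ℤ → A) (i : ℤ) : ℤ :=
  if 0 ≤ i then ((List.range i.toNat).map fun j => ((φ (x (j : ℤ))).length : ℤ)).sum
  else -((List.range (-i).toNat).map fun j => ((φ (x (-(j : ℤ) - 1))).length : ℤ)).sum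

/-- `y` is the image of the bi-infinite word `x` under the substitution `φ`
(with images of letters nonempty). -/
def IsSubstImage {A B : Type*} (φ : A → List B) (x : ℤ → A) (y : ℤ → B) : Prop :=
  (∀ a : A, φ a ≠ []) ∧
  ∀ i : ℤ, subwordZ y (blockStart φ x i) (φ (x i)).length = φ (x i)

/-- `φ_x(Γ)`: positions of `φ(x)` occupied by images of letters at positions in `Γ`. -/
def substSupp {A B : Type*} (φ : A → List B) (x : ℤ → A) (Γ : Set ℤ) : Set ℤ :=
  {n : ℤ | ∃ i ∈ Γ, blockStart φ x i ≤ n ∧ n < blockStart φ x i + ((φ (x i)).length : ℤ)}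

/-- `φ_x^{-1}(Γ)`: positions of letters of `x` whose image blocks in `φ(x)` meet `Γ`. -/
def substPreimage {A B : Type*} (φ : A → List B) (x : ℤ → A) (Γ : Set ℤ) : Set ℤ :=
  {i : ℤ | ∃ n ∈ Γ, blockStart φ x i ≤ n ∧ n < blockStart φ x i + ((φ (x i)).length : ℤ)}

/-- The set of occurrences of `w` in the finite word `u`. -/
def occSetF {B : Type*} (u w : List B) : Set ℕ :=
  {i : ℕ | i + w.length ≤ u.length ∧ (u.drop i).take w.length = w}

/-- `φ` is a return morphism for `w`. -/
def IsReturnMorphism {A B : Type*} (φ : A → List B) (w : List B) : Prop :=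
  w ≠ [] ∧ Function.Injective φ ∧ (∀ a : A, φ a ≠ []) ∧
  ∀ a : A, occSetF (w ++ φ a) w = {0, (φ a).length}

def listPow {A : Type*} (u : List A) : ℕ → List A
  | 0 => []
  | n + 1 => u ++ listPow u n

/-- A substitution on `{0,1}` is acyclic if `φ(0)` and `φ(1)` are not powers of one word. -/
def AcyclicSubst {A : Type*} (φ : Fin 2 → List A) : Prop :=
  ¬ ∃ (u : List A) (m n : ℕ), φ 0 = listPow u m ∧ φ 1 = listPow u n

/-- The substitution `L₀ : 0 ↦ 0, 1 ↦ 01`. -/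
def Lzero : Fin 2 → List (Fin 2) := fun a => if a = 0 then [0] else [0, 1]

/-- The substitution `L₁ : 0 ↦ 10, 1 ↦ 1`. -/
def Lone : Fin 2 → List (Fin 2) := fun a => if a = 0 then [1, 0] else [1]

/-- A finite word has period `r`. -/
def PeriodicF {A : Type*} (w : List A) (r : ℕ) : Prop :=
  ∀ i : ℕ, i + r < w.length → w[i]? = w[i + r]?

/-- `Γ` is a string attractor of the finite word `w`. -/
def IsAttractorF {A : Type*} (w : List A) (Γ : Set ℕ) : Prop :=
  ∀ u : List A, u ≠ [] → u <:+: w →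
    ∃ i : ℕ, i + u.length ≤ w.length ∧ (w.drop i).take u.length = u ∧
      ∃ p ∈ Γ, i ≤ p ∧ p < i + u.length

def RecurrentZ {A : Type*} (x : ℤ → A) : Prop :=
  ∀ w : List A, IsFactorZ x w → {i : ℤ | occursAt x w i}.Infinite

def UniformlyRecurrentZ {A : Type*} (x : ℤ → A) : Prop :=
  ∀ w : List A, IsFactorZ x w →
    ∃ n : ℕ, ∀ i : ℤ, ∃ j : ℤ, i ≤ j ∧ j + (w.length : ℤ) ≤ i + (n : ℤ) ∧ occursAt x w j

def ModuloRecurrentZ {A : Type*} (x : ℤ → A) : Prop :=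
  ∀ w : List A, IsFactorZ x w → ∀ k : ℕ, 1 ≤ k → ∀ r : ℤ,
    ∃ i : ℤ, occursAt x w i ∧ (k : ℤ) ∣ (i - r)

/-- A shift space: closed (product topology, `A` discrete) and shift-invariant. -/
def IsShiftSpace {A : Type*} (X : Set (ℤ → A)) : Prop :=
  @IsClosed _ (@Pi.topologicalSpace ℤ (fun _ => A) (fun _ => ⊥)) X ∧ shiftZ 1 '' X = X

def IsAttractorX {A : Type*} (X : Set (ℤ → A)) (Γ : Set ℤ) : Prop :=
  ∀ x ∈ X, IsAttractorZ x Γ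

def MinimalShift {A : Type*} (X : Set (ℤ → A)) : Prop :=
  IsShiftSpace X ∧ ∀ Y ⊆ X, IsShiftSpace Y → Y = ∅ ∨ Y = X

/-- The orbit closure of a bi-infinite word (product topology, `A` discrete). -/
def orbitClosureZ {A : Type*} (x : ℤ → A) : Set (ℤ → A) :=
  @closure _ (@Pi.topologicalSpace ℤ (fun _ => A) (fun _ => ⊥)) {y | ∃ k : ℤ, y = shiftZ k x}


section Aux

variable {A β : Type*}

lemma drop_len_append {γ : Type*} {u v : List γ} {d : ℕ} (hd : u.length = d) :
    (u ++ v).drop d = v := by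
  subst hd; exact List.drop_left

lemma flatMap_pure_map {γ δ : Type*} (f : γ → δ) (l : List γ) :
    (l.flatMap fun a => [f a]) = List.map f l := by
  induction l with
  | nil => rfl
  | cons a l ih => simp [List.flatMap_cons, ih]

lemma subwordZ_def' (x : ℤ → A) (i : ℤ) (n : ℕ) :
    subwordZ x i n = (List.range n).map (fun j : ℕ => x (i + (j : ℤ))) := by
  show List.map (fun j : ℤ => x (i + j))
    ((List.range n).flatMap fun a : ℕ => [((a : ℕ) : ℤ)]) = _
  rw [flatMap_pure_map, List.map_map]
  rfl

lemma subwordZ_length (x : ℤ → A) (i : ℤ) (n : ℕ) : (subwordZ x i n).length = n := by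
  rw [subwordZ_def', List.length_map, List.length_range]

lemma subwordZ_append (x : ℤ → A) (i : ℤ) (a b : ℕ) :
    subwordZ x i (a + b) = subwordZ x i a ++ subwordZ x (i + a) b := by
  rw [subwordZ_def', subwordZ_def', subwordZ_def', List.range_add, List.map_append,
    List.map_map]
  congr 1
  refine List.map_congr_left fun j hj => ?_
  show x (i + ((a + j : ℕ) : ℤ)) = x (i + (a : ℤ) + (j : ℤ))
  congr 1
  push_cast
  ring

lemma subwordZ_take (x : ℤ → A) (i : ℤ) {a b : ℕ} (h : a ≤ b) :
    (subwordZ x i b).take a = subwordZ x i a := by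
  obtain ⟨c, rfl⟩ := Nat.exists_eq_add_of_le h
  rw [subwordZ_append, List.take_append_of_le_length (by rw [subwordZ_length]),
    List.take_of_length_le (by rw [subwordZ_length])]

lemma subwordZ_drop_take (z : ℤ → β) (q : ℤ) {c : ℕ} (d e : ℕ) (h : d + e ≤ c) :
    ((subwordZ z q c).drop d).take e = subwordZ z (q + d) e := by
  have hc : c = d + (c - d) := by omega
  rw [hc, subwordZ_append, drop_len_append (subwordZ_length _ _ _)]
  exact subwordZ_take _ _ (by omega)

lemma occursAt_append_split {x : ℤ → A} {s t : List A} {q : ℤ}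
    (h : occursAt x (s ++ t) q) :
    occursAt x s q ∧ occursAt x t (q + s.length) := by
  unfold occursAt at *
  rw [List.length_append, subwordZ_append] at h
  exact List.append_inj h (subwordZ_length _ _ _)

lemma occursAt_append_combine {x : ℤ → A} {s t : List A} {q : ℤ}
    (h1 : occursAt x s q) (h2 : occursAt x t (q + s.length)) :
    occursAt x (s ++ t) q := by
  unfold occursAt at *
  rw [List.length_append, subwordZ_append, h1, h2]

lemma blockStart_of_nonneg (φ : A → List β) (x : ℤ → A) {i : ℤ} (h : 0 ≤ i) :
    blockStart φ x i
      = ((List.range i.toNat).map fun j : ℕ => ((φ (x (j : ℤ))).length : ℤ)).sum := by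
  have h0 : blockStart φ x i = (List.map (fun j : ℤ => ((φ (x j)).length : ℤ))
      ((List.range i.toNat).flatMap fun a : ℕ => [((a : ℕ) : ℤ)])).sum := by
    unfold blockStart
    rw [if_pos h]
    rfl
  rw [h0, flatMap_pure_map, List.map_map]
  rfl

lemma blockStart_of_neg (φ : A → List β) (x : ℤ → A) {i : ℤ} (h : ¬ 0 ≤ i) :
    blockStart φ x i
      = -((List.range (-i).toNat).map fun j : ℕ => ((φ (x (-(j : ℤ) - 1))).length : ℤ)).sum := by
  have h0 : blockStart φ x i = -(List.map (fun j : ℤ => ((φ (x (-j - 1))).length : ℤ))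
      ((List.range (-i).toNat).flatMap fun a : ℕ => [((a : ℕ) : ℤ)])).sum := by
    unfold blockStart
    rw [if_neg h]
    rfl
  rw [h0, flatMap_pure_map, List.map_map]
  rfl

lemma blockStart_zero (φ : A → List β) (x : ℤ → A) : blockStart φ x 0 = 0 := by
  rw [blockStart_of_nonneg φ x le_rfl]
  simp

lemma blockStart_succ (φ : A → List β) (x : ℤ → A) (i : ℤ) :
    blockStart φ x (i + 1) = blockStart φ x i + ((φ (x i)).length : ℤ) := by
  rcases le_or_gt 0 i with hi | hi
  · have h1 : (0:ℤ) ≤ i + 1 := by omega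
    have h2 : (i+1).toNat = i.toNat + 1 := by omega
    rw [blockStart_of_nonneg φ x h1, blockStart_of_nonneg φ x hi, h2, List.range_succ,
      List.map_append, List.sum_append]
    have h3 : ((i.toNat : ℤ)) = i := Int.toNat_of_nonneg hi
    simp [h3]
  · rcases eq_or_lt_of_le (by omega : i + 1 ≤ 0) with h0 | h0
    · have hi1 : i = -1 := by omega
      subst hi1
      have e1 : (-1 : ℤ) + 1 = 0 := by norm_num
      rw [e1, blockStart_zero, blockStart_of_neg φ x (by norm_num)]
      have e2 : (-(-1 : ℤ)).toNat = 1 := by norm_num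
      rw [e2, show List.range 1 = [0] from rfl, List.map_singleton, List.sum_singleton]
      norm_num
    · have h1 : ¬ (0:ℤ) ≤ i + 1 := by omega
      have h2 : ¬ (0:ℤ) ≤ i := by omega
      rw [blockStart_of_neg φ x h1, blockStart_of_neg φ x h2]
      have h3 : (-i).toNat = (-(i+1)).toNat + 1 := by omega
      rw [h3, List.range_succ, List.map_append, List.sum_append, List.map_singleton,
        List.sum_singleton]
      have h4 : -(((-(i+1)).toNat : ℤ)) - 1 = i := by omega
      rw [h4]
      ring

lemma blockStart_add_le (φ : A → List β) (x : ℤ → A) (hφ : ∀ a, φ a ≠ [])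
    (i : ℤ) (d : ℕ) :
    blockStart φ x i + (d : ℤ) ≤ blockStart φ x (i + (d : ℤ)) := by
  induction d with
  | zero => simp
  | succ d ih =>
    have h1 := blockStart_succ φ x (i + (d : ℤ))
    have hl : 1 ≤ ((φ (x (i + (d : ℤ)))).length : ℤ) := by
      exact_mod_cast List.length_pos_iff.mpr (hφ (x (i + (d : ℤ))))
    have h2 : i + (((d : ℕ) + 1 : ℕ) : ℤ) = (i + (d : ℤ)) + 1 := by push_cast; ring
    rw [h2]
    push_cast
    omega

lemma blockStart_le_of_le (φ : A → List β) (x : ℤ → A) (hφ : ∀ a, φ a ≠ [])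
    {i j : ℤ} (h : i ≤ j) :
    blockStart φ x i + (j - i) ≤ blockStart φ x j := by
  have h0 := blockStart_add_le φ x hφ i (j - i).toNat
  rw [Int.toNat_of_nonneg (by omega)] at h0
  have h2 : i + (j - i) = j := by ring
  rw [h2] at h0
  exact h0

lemma blockStart_mono (φ : A → List β) (x : ℤ → A) (hφ : ∀ a, φ a ≠ [])
    {i j : ℤ} (h : i ≤ j) : blockStart φ x i ≤ blockStart φ x j := by
  have := blockStart_le_of_le φ x hφ h
  omega

lemma exists_block (φ : A → List β) (x : ℤ → A) (hφ : ∀ a, φ a ≠ []) (p : ℤ) :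
    ∃ i, blockStart φ x i ≤ p ∧ p < blockStart φ x (i + 1) := by
  have hbdd : ∃ b : ℤ, ∀ i : ℤ, blockStart φ x i ≤ p → i ≤ b := by
    refine ⟨max p 0, fun i hi => ?_⟩
    rcases le_or_gt i 0 with h | h
    · omega
    · have := blockStart_le_of_le φ x hφ (le_of_lt h : (0:ℤ) ≤ i)
      rw [blockStart_zero] at this
      omega
  have hne : ∃ i : ℤ, blockStart φ x i ≤ p := by
    rcases le_or_gt 0 p with h | h
    · exact ⟨0, by rw [blockStart_zero]; omega⟩
    · refine ⟨p, ?_⟩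
      have := blockStart_le_of_le φ x hφ (le_of_lt h : p ≤ 0)
      rw [blockStart_zero] at this
      omega
  obtain ⟨ub, hub, hmax⟩ := Int.exists_greatest_of_bdd hbdd hne
  refine ⟨ub, hub, ?_⟩
  by_contra hc
  push_neg at hc
  have := hmax (ub + 1) hc
  omega

/-- The image of the length-`c` segment of `x` starting at `i`. -/
def fword (φ : A → List β) (x : ℤ → A) (i : ℤ) (c : ℕ) : List β :=
  ((List.range c).map fun t : ℕ => φ (x (i + (t : ℤ)))).flatten

lemma fword_zero (φ : A → List β) (x : ℤ → A) (i : ℤ) : fword φ x i 0 = [] := by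
  simp [fword]

lemma fword_succ (φ : A → List β) (x : ℤ → A) (i : ℤ) (c : ℕ) :
    fword φ x i (c + 1) = fword φ x i c ++ φ (x (i + (c : ℤ))) := by
  unfold fword
  rw [List.range_succ, List.map_append, List.flatten_append]
  simp

lemma fword_succ' (φ : A → List β) (x : ℤ → A) (i : ℤ) (c : ℕ) :
    fword φ x i (c + 1) = φ (x i) ++ fword φ x (i + 1) c := by
  unfold fword
  rw [List.range_succ_eq_map]
  simp only [List.map_cons, List.map_map, List.flatten_cons, Nat.cast_zero, add_zero]
  congr 2
  refine List.map_congr_left fun j hj => ?_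
  simp only [Function.comp_apply]
  congr 2
  push_cast
  ring

lemma fword_length (φ : A → List β) (x : ℤ → A) (i : ℤ) (c : ℕ) :
    ((fword φ x i c).length : ℤ) = blockStart φ x (i + (c : ℤ)) - blockStart φ x i := by
  induction c with
  | zero => simp [fword_zero]
  | succ c ih =>
    rw [fword_succ, List.length_append]
    push_cast
    rw [ih]
    have h1 : i + ((c : ℤ) + 1) = (i + (c : ℤ)) + 1 := by ring
    rw [h1, blockStart_succ]
    ring

lemma fword_congr (φ : A → List β) (x : ℤ → A) {i j : ℤ} {c : ℕ}
    (h : ∀ t : ℕ, t < c → x (i + (t : ℤ)) = x (j + (t : ℤ))) :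
    fword φ x i c = fword φ x j c := by
  unfold fword
  congr 1
  refine List.map_congr_left fun t ht => ?_
  rw [h t (List.mem_range.mp ht)]

lemma fword_occurs {φ : A → List β} {x : ℤ → A} {z : ℤ → β}
    (hz : IsSubstImage φ x z) (i : ℤ) (c : ℕ) :
    occursAt z (fword φ x i c) (blockStart φ x i) := by
  induction c with
  | zero =>
    rw [fword_zero]
    show subwordZ z _ (List.length []) = []
    simp [subwordZ_def']
  | succ c ih =>
    rw [fword_succ]
    refine occursAt_append_combine ih ?_
    have h1 : blockStart φ x i + ((fword φ x i c).length : ℤ)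
        = blockStart φ x (i + (c : ℤ)) := by
      rw [fword_length]; ring
    rw [h1]
    exact hz.2 (i + (c : ℤ))

lemma ret_suffix {φ : A → List β} {w : List β} (hret : IsReturnMorphism φ w) (a : A) :
    ∃ s : List β, w ++ φ a = s ++ w ∧ s.length = (φ a).length := by
  obtain ⟨hw, hinj, hne, hocc⟩ := hret
  have hmem : (φ a).length ∈ occSetF (w ++ φ a) w := by
    rw [hocc a]; right; rfl
  obtain ⟨hle, heq⟩ := hmem
  have hlen : ((w ++ φ a).drop (φ a).length).length = w.length := by
    simp
  have hdw : (w ++ φ a).drop (φ a).length = w := by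
    have h3 := List.take_of_length_le (le_of_eq hlen)
    rw [h3] at heq
    exact heq
  refine ⟨(w ++ φ a).take (φ a).length, ?_, ?_⟩
  · have h2 := List.take_append_drop (φ a).length (w ++ φ a)
    rw [hdw] at h2
    exact h2.symm
  · simp

lemma fword_endsw {φ : A → List β} {w : List β} (hret : IsReturnMorphism φ w)
    (x : ℤ → A) (i : ℤ) (c : ℕ) :
    ∃ s : List β, w ++ fword φ x i c = s ++ w ∧ s.length = (fword φ x i c).length := by
  induction c with
  | zero => exact ⟨[], by simp [fword_zero], by simp [fword_zero]⟩
  | succ c ih =>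
    obtain ⟨s, hs, hsl⟩ := ih
    obtain ⟨sa, hsa, hsal⟩ := ret_suffix hret (x (i + (c : ℤ)))
    refine ⟨s ++ sa, ?_, ?_⟩
    · rw [fword_succ, ← List.append_assoc, hs, List.append_assoc, hsa,
        ← List.append_assoc]
    · rw [fword_succ]
      simp only [List.length_append, hsl, hsal]

lemma occ_cuts {φ : A → List β} {w : List β} (hret : IsReturnMorphism φ w)
    (x : ℤ → A) (i : ℤ) (c : ℕ) (d : ℕ) :
    d ∈ occSetF (w ++ fword φ x i c) w ↔
      ∃ t : ℕ, t ≤ c ∧ (d : ℤ) = blockStart φ x (i + (t : ℤ)) - blockStart φ x i := by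
  have hW : 1 ≤ w.length := List.length_pos_iff.mpr hret.1
  induction c with
  | zero =>
    rw [fword_zero, List.append_nil]
    constructor
    · rintro ⟨hle, heq⟩
      refine ⟨0, le_refl _, ?_⟩
      have hd0 : d = 0 := by omega
      subst hd0
      simp only [Nat.cast_zero, add_zero]
      ring
    · rintro ⟨t, ht, hd⟩
      have ht0 : t = 0 := by omega
      subst ht0
      simp only [Nat.cast_zero, add_zero] at hd
      have hd0 : d = 0 := by omega
      subst hd0
      refine ⟨by omega, ?_⟩
      rw [List.drop_zero, List.take_of_length_le le_rfl]
  | succ c ih =>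
    set X := w ++ fword φ x i c with hX
    have hXlen : X.length = w.length + (fword φ x i c).length := by
      rw [hX, List.length_append]
    have hfsucc : w ++ fword φ x i (c + 1) = X ++ φ (x (i + (c : ℤ))) := by
      rw [fword_succ, hX, List.append_assoc]
    have hFc : ((fword φ x i c).length : ℤ)
        = blockStart φ x (i + (c : ℤ)) - blockStart φ x i := fword_length φ x i c
    have hLa : ((φ (x (i + (c : ℤ)))).length : ℤ)
        = blockStart φ x (i + (c : ℤ) + 1) - blockStart φ x (i + (c : ℤ)) := by
      rw [blockStart_succ]; ring
    obtain ⟨s, hs, hsl⟩ := fword_endsw hret x i c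
    have hrw : X ++ φ (x (i + (c : ℤ))) = s ++ (w ++ φ (x (i + (c : ℤ)))) := by
      rw [hX, hs, List.append_assoc]
    constructor
    · rintro ⟨hle, heq⟩
      rw [hfsucc] at hle heq
      rw [List.length_append] at hle
      rcases le_or_gt (d + w.length) X.length with h1 | h1
      · have hdX : d ≤ X.length := by omega
        have hdrop : (X ++ φ (x (i + (c : ℤ)))).drop d
            = X.drop d ++ φ (x (i + (c : ℤ))) :=
          List.drop_append_of_le_length hdX
        rw [hdrop, List.take_append_of_le_length
          (by rw [List.length_drop]; omega)] at heq
        obtain ⟨t, ht, hd⟩ := ih.mp ⟨h1, heq⟩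
        refine ⟨t, by omega, hd⟩
      · have hFd : (fword φ x i c).length < d := by omega
        have hde : d = s.length + (d - (fword φ x i c).length) := by omega
        rw [hrw] at heq
        rw [hde, List.drop_length_add_append] at heq
        have hmem : (d - (fword φ x i c).length)
            ∈ occSetF (w ++ φ (x (i + (c : ℤ)))) w := by
          refine ⟨?_, heq⟩
          rw [List.length_append]
          omega
        rw [hret.2.2.2 (x (i + (c : ℤ))), Set.mem_insert_iff,
          Set.mem_singleton_iff] at hmem
        rcases hmem with hmem | hmem
        · exfalso
          omega
        · refine ⟨c + 1, le_refl _, ?_⟩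
          have hdv : (d : ℤ) = ((fword φ x i c).length : ℤ)
              + ((φ (x (i + (c : ℤ)))).length : ℤ) := by
            have : d = (fword φ x i c).length + (φ (x (i + (c : ℤ)))).length := by omega
            rw [this]
            push_cast
            ring
          rw [hdv, hFc, hLa]
          push_cast
          rw [show i + ((c : ℤ) + 1) = i + (c : ℤ) + 1 by ring]
          ring
    · rintro ⟨t, ht, hd⟩
      rcases le_or_gt t c with htc | htc
      · obtain ⟨hle, heq⟩ := ih.mpr ⟨t, htc, hd⟩
        rw [hfsucc]
        refine ⟨by rw [List.length_append]; omega, ?_⟩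
        rw [List.drop_append_of_le_length (by omega),
          List.take_append_of_le_length (by rw [List.length_drop]; omega)]
        exact heq
      · have htc1 : t = c + 1 := by omega
        subst htc1
        have hdval : (d : ℤ) = ((fword φ x i c).length : ℤ)
            + ((φ (x (i + (c : ℤ)))).length : ℤ) := by
          rw [hFc, hLa]
          push_cast at hd ⊢
          rw [show i + ((c : ℤ) + 1) = i + (c : ℤ) + 1 by ring] at hd
          omega
        have hdval' : d = s.length + (φ (x (i + (c : ℤ)))).length := by
          rw [hsl]; exact_mod_cast hdval
        obtain ⟨sa, hsa, hsal⟩ := ret_suffix hret (x (i + (c : ℤ)))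
        rw [hfsucc]
        constructor
        · rw [List.length_append, hXlen]
          omega
        · rw [hrw, hdval', List.drop_length_add_append, hsa, ← hsal, List.drop_left,
            List.take_of_length_le (le_refl _)]

lemma occursAt_sub {z : ℤ → β} {u : List β} {pos : ℤ} (hoc : occursAt z u pos)
    {d e : ℕ} (h : d + e ≤ u.length) :
    subwordZ z (pos + (d : ℤ)) e = (u.drop d).take e := by
  have h1 := subwordZ_drop_take z pos d e h
  unfold occursAt at hoc
  rw [hoc] at h1
  exact h1.symm

lemma w_occurs_at_block {φ : A → List β} {w : List β} {x : ℤ → A} {z : ℤ → β}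
    (hret : IsReturnMorphism φ w) (hz : IsSubstImage φ x z) (i : ℤ) :
    occursAt z w (blockStart φ x i - (w.length : ℤ)) := by
  have hφ := hz.1
  have hW : 1 ≤ w.length := List.length_pos_iff.mpr hret.1
  have hji : (i - (w.length : ℤ)) + (w.length : ℤ) = i := by ring
  have hFlen : ((fword φ x (i - (w.length : ℤ)) w.length).length : ℤ)
      = blockStart φ x i - blockStart φ x (i - (w.length : ℤ)) := by
    have := fword_length φ x (i - (w.length : ℤ)) w.length
    rw [hji] at this
    exact this
  have hWle : (w.length : ℤ) ≤ ((fword φ x (i - (w.length : ℤ)) w.length).length : ℤ) := by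
    have := blockStart_le_of_le φ x hφ (show i - (w.length : ℤ) ≤ i by omega)
    omega
  obtain ⟨s, hs, hsl⟩ := fword_endsw hret x (i - (w.length : ℤ)) w.length
  have hsW : w.length ≤ s.length := by
    rw [hsl]; exact_mod_cast hWle
  have hF2 : fword φ x (i - (w.length : ℤ)) w.length = s.drop w.length ++ w := by
    have h1 : (w ++ fword φ x (i - (w.length : ℤ)) w.length).drop w.length
        = fword φ x (i - (w.length : ℤ)) w.length := drop_len_append rfl
    rw [hs, List.drop_append_of_le_length hsW] at h1
    exact h1.symm
  have hocc := fword_occurs hz (i - (w.length : ℤ)) w.length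
  rw [hF2] at hocc
  have h2 := (occursAt_append_split hocc).2
  have hlen2 : blockStart φ x (i - (w.length : ℤ)) + ((s.drop w.length).length : ℤ)
      = blockStart φ x i - (w.length : ℤ) := by
    rw [List.length_drop, hsl]
    have hF2l : (fword φ x (i - (w.length : ℤ)) w.length).length
        = (s.drop w.length ++ w).length := by rw [hF2]
    rw [List.length_append, List.length_drop, hsl] at hF2l
    omega
  rw [hlen2] at h2
  exact h2

lemma occ_is_block {φ : A → List β} {w : List β} {x : ℤ → A} {z : ℤ → β}
    (hret : IsReturnMorphism φ w) (hz : IsSubstImage φ x z) {q : ℤ}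
    (h : occursAt z w q) :
    ∃ j : ℤ, q = blockStart φ x j - (w.length : ℤ) := by
  have hφ := hz.1
  have hW : 1 ≤ w.length := List.length_pos_iff.mpr hret.1
  obtain ⟨i, hi1, hi2⟩ := exists_block φ x hφ q
  have hupper : q + (w.length : ℤ)
      ≤ blockStart φ x (i + ((w.length + 1 : ℕ) : ℤ)) := by
    have h1 := blockStart_le_of_le φ x hφ
      (show i + 1 ≤ i + ((w.length + 1 : ℕ) : ℤ) by push_cast; omega)
    push_cast at h1 ⊢
    omega
  have hfull : occursAt z (w ++ fword φ x i (w.length + 1))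
      (blockStart φ x i - (w.length : ℤ)) := by
    refine occursAt_append_combine (w_occurs_at_block hret hz i) ?_
    rw [show blockStart φ x i - (w.length : ℤ) + (w.length : ℤ) = blockStart φ x i by ring]
    exact fword_occurs hz i (w.length + 1)
  have hdq : (((q - (blockStart φ x i - w.length)).toNat : ℕ) : ℤ)
      = q - (blockStart φ x i - w.length) := Int.toNat_of_nonneg (by omega)
  have hlenv : ((w ++ fword φ x i (w.length + 1)).length : ℤ)
      = (w.length : ℤ) + (blockStart φ x (i + ((w.length + 1 : ℕ) : ℤ)) - blockStart φ x i) := by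
    rw [List.length_append]
    push_cast
    rw [fword_length]
    push_cast
    ring
  have hle' : (q - (blockStart φ x i - w.length)).toNat + w.length
      ≤ (w ++ fword φ x i (w.length + 1)).length := by omega
  have hmem : (q - (blockStart φ x i - w.length)).toNat
      ∈ occSetF (w ++ fword φ x i (w.length + 1)) w := by
    refine ⟨hle', ?_⟩
    have h1 := occursAt_sub hfull hle'
    rw [show blockStart φ x i - (w.length : ℤ)
        + (((q - (blockStart φ x i - w.length)).toNat : ℕ) : ℤ) = q by omega] at h1
    unfold occursAt at h
    rw [h] at h1
    exact h1.symm
  obtain ⟨t, ht, hdt⟩ := (occ_cuts hret x i (w.length + 1) _).mp hmem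
  exact ⟨i + (t : ℤ), by omega⟩

lemma desubst {φ : A → List β} {w : List β} {x : ℤ → A} {z : ℤ → β}
    (hret : IsReturnMorphism φ w) (hz : IsSubstImage φ x z) :
    ∀ (c : ℕ) (i j : ℤ), occursAt z (fword φ x i c) (blockStart φ x j) →
      ∀ t : ℕ, t < c → x (j + (t : ℤ)) = x (i + (t : ℤ)) := by
  have hφ := hz.1
  have hW : 1 ≤ w.length := List.length_pos_iff.mpr hret.1
  intro c
  induction c with
  | zero => exact fun i j _ t ht => absurd ht (by omega)
  | succ c ih =>
    intro i j hoccF t ht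
    have hpos : blockStart φ x j - (w.length : ℤ) + (w.length : ℤ) = blockStart φ x j := by
      ring
    have hP : occursAt z (w ++ fword φ x i (c+1)) (blockStart φ x j - (w.length : ℤ)) :=
      occursAt_append_combine (w_occurs_at_block hret hz j) (by rw [hpos]; exact hoccF)
    have hY : occursAt z (w ++ fword φ x j ((w ++ fword φ x i (c+1)).length))
        (blockStart φ x j - (w.length : ℤ)) :=
      occursAt_append_combine (w_occurs_at_block hret hz j)
        (by rw [hpos]; exact fword_occurs hz j _)
    have hfjl := fword_length φ x j ((w ++ fword φ x i (c+1)).length)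
    have hYlen : (w ++ fword φ x i (c+1)).length
        ≤ (w ++ fword φ x j ((w ++ fword φ x i (c+1)).length)).length := by
      have h1 := blockStart_add_le φ x hφ j ((w ++ fword φ x i (c+1)).length)
      conv_rhs => rw [List.length_append]
      omega
    have transfer : ∀ d : ℕ, d + w.length ≤ (w ++ fword φ x i (c+1)).length →
        (d ∈ occSetF (w ++ fword φ x i (c+1)) w ↔
          d ∈ occSetF (w ++ fword φ x j ((w ++ fword φ x i (c+1)).length)) w) := by
      intro d hd
      have hd' : d + w.length
          ≤ (w ++ fword φ x j ((w ++ fword φ x i (c+1)).length)).length :=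
        le_trans hd hYlen
      have e1 := occursAt_sub hP hd
      have e2 := occursAt_sub hY hd'
      constructor
      · rintro ⟨_, hq⟩
        exact ⟨hd', by rw [← e2, e1]; exact hq⟩
      · rintro ⟨_, hq⟩
        exact ⟨hd, by rw [← e1, e2]; exact hq⟩
    have hL1len : (fword φ x i (c+1)).length
        = (φ (x i)).length + (fword φ x (i+1) c).length := by
      rw [fword_succ', List.length_append]
    have hL1P : (φ (x i)).length ∈ occSetF (w ++ fword φ x i (c+1)) w := by
      refine (occ_cuts hret x i (c+1) _).mpr ⟨1, by omega, ?_⟩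
      simp only [Nat.cast_one]
      rw [blockStart_succ]
      ring
    have hL1W : (φ (x i)).length + w.length ≤ (w ++ fword φ x i (c+1)).length := by
      rw [List.length_append]
      omega
    have hM1 : (φ (x j)).length ≤ (φ (x i)).length := by
      obtain ⟨t', ht', htval⟩ :=
        (occ_cuts hret x j _ _).mp ((transfer _ hL1W).mp hL1P)
      have ht'1 : 1 ≤ t' := by
        by_contra hcon
        push_neg at hcon
        have ht'0 : t' = 0 := by omega
        subst ht'0
        simp only [Nat.cast_zero, add_zero] at htval
        have := List.length_pos_iff.mpr (hφ (x i))
        omega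
      have h1 := blockStart_le_of_le φ x hφ (show j + 1 ≤ j + (t' : ℤ) by omega)
      have h2 := blockStart_succ φ x j
      omega
    have hM1Y : (φ (x j)).length
        ∈ occSetF (w ++ fword φ x j ((w ++ fword φ x i (c+1)).length)) w := by
      refine (occ_cuts hret x j _ _).mpr ⟨1, by rw [List.length_append]; omega, ?_⟩
      simp only [Nat.cast_one]
      rw [blockStart_succ]
      ring
    have hM1W : (φ (x j)).length + w.length ≤ (w ++ fword φ x i (c+1)).length := by
      omega
    have hL1 : (φ (x i)).length ≤ (φ (x j)).length := by
      obtain ⟨t', ht', htval⟩ :=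
        (occ_cuts hret x i _ _).mp ((transfer _ hM1W).mpr hM1Y)
      have ht'1 : 1 ≤ t' := by
        by_contra hcon
        push_neg at hcon
        have ht'0 : t' = 0 := by omega
        subst ht'0
        simp only [Nat.cast_zero, add_zero] at htval
        have := List.length_pos_iff.mpr (hφ (x j))
        omega
      have h1 := blockStart_le_of_le φ x hφ (show i + 1 ≤ i + (t' : ℤ) by omega)
      have h2 := blockStart_succ φ x i
      omega
    have hLeq : (φ (x i)).length = (φ (x j)).length := le_antisymm hL1 hM1
    have hphi : φ (x i) = φ (x j) := by
      have e1 := occursAt_sub hP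
        (show w.length + (φ (x i)).length ≤ (w ++ fword φ x i (c+1)).length by omega)
      have e2 := occursAt_sub hY
        (show w.length + (φ (x j)).length
          ≤ (w ++ fword φ x j ((w ++ fword φ x i (c+1)).length)).length by omega)
      rw [drop_len_append rfl] at e1 e2
      rw [fword_succ', List.take_left] at e1
      obtain ⟨c2, hc2⟩ : ∃ c2, (w ++ fword φ x i (c+1)).length = c2 + 1 := by
        refine ⟨(w ++ fword φ x i (c+1)).length - 1, ?_⟩
        rw [List.length_append]
        omega
      rw [hc2, fword_succ', List.take_left] at e2
      rw [← hLeq] at e2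
      exact e1.symm.trans e2
    have hxij : x i = x j := hret.2.1 hphi
    have htail : occursAt z (fword φ x (i+1) c) (blockStart φ x (j+1)) := by
      rw [fword_succ'] at hoccF
      have h1 := (occursAt_append_split hoccF).2
      rw [show blockStart φ x j + ((φ (x i)).length : ℤ) = blockStart φ x (j+1) by
        rw [blockStart_succ, hLeq]] at h1
      exact h1
    cases t with
    | zero => simpa using hxij.symm
    | succ s =>
      have h1 := ih (i+1) (j+1) htail s (by omega)
      have e1 : j + (((s+1 : ℕ)) : ℤ) = j + 1 + (s : ℤ) := by push_cast; ring
      have e2 : i + (((s+1 : ℕ)) : ℤ) = i + 1 + (s : ℤ) := by push_cast; ring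
      rw [e1, e2]
      exact h1

end Aux

/-- For a return morphism `φ` for `w` and an interval string attractor
`Γ = [n, n+k]` of `φ(x)`, the pre-image `φ_x^{-1}(Γ)` is an interval `[m, m+ℓ]` and
`[m, m+ℓ+|w|]` is a string attractor of `x`. -/
theorem preimage_attractor_return_morphism {A B : Type*} (x : ℤ → A) (z : ℤ → B)
    (φ : A → List B) (w : List B) (hret : IsReturnMorphism φ w)
    (hz : IsSubstImage φ x z) (n : ℤ) (k : ℕ)
    (hΓ : IsAttractorZ z (Set.Icc n (n + (k : ℤ)))) :
    ∃ (m : ℤ) (ℓ : ℕ),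
      substPreimage φ x (Set.Icc n (n + (k : ℤ))) = Set.Icc m (m + (ℓ : ℤ)) ∧
      IsAttractorZ x (Set.Icc m (m + (ℓ : ℤ) + (w.length : ℤ))) := by
  have hφ : ∀ a, φ a ≠ [] := hz.1
  have hinj : Function.Injective φ := hret.2.1
  have hW : 1 ≤ w.length := List.length_pos_iff.mpr hret.1
  have hk0 : (0 : ℤ) ≤ (k : ℤ) := Int.ofNat_nonneg k
  obtain ⟨m, hm1, hm2⟩ := exists_block φ x hφ n
  obtain ⟨m', hm'1, hm'2⟩ := exists_block φ x hφ (n + (k : ℤ))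
  have hmm' : m ≤ m' := by
    by_contra hcon
    push_neg at hcon
    have := blockStart_mono φ x hφ (show m' + 1 ≤ m by omega)
    omega
  have hml : m + (((m' - m).toNat : ℕ) : ℤ) = m' := by omega
  refine ⟨m, (m' - m).toNat, ?_, ?_⟩
  · ext i
    simp only [substPreimage, Set.mem_setOf_eq, Set.mem_Icc]
    have hB := blockStart_succ φ x i
    constructor
    · rintro ⟨p, hp, h1, h2⟩
      constructor
      · by_contra hcon
        push_neg at hcon
        have := blockStart_mono φ x hφ (show i + 1 ≤ m by omega)
        omega
      · by_contra hcon
        push_neg at hcon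
        have := blockStart_mono φ x hφ (show m' + 1 ≤ i by omega)
        omega
    · rintro ⟨h1, h2⟩
      have h2' : i ≤ m' := by omega
      refine ⟨max n (blockStart φ x i), ?_, le_max_right _ _, ?_⟩
      · have := blockStart_mono φ x hφ h2'
        exact ⟨le_max_left _ _, by omega⟩
      · have h3 := blockStart_mono φ x hφ (show m + 1 ≤ i + 1 by omega)
        have h4 : 1 ≤ ((φ (x i)).length : ℤ) := by
          exact_mod_cast List.length_pos_iff.mpr (hφ (x i))
        omega
  · intro u hu hufac
    obtain ⟨i0, hi0⟩ := hufac
    have hc1 : 1 ≤ u.length := List.length_pos_iff.mpr hu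
    have hv : occursAt z (w ++ fword φ x i0 u.length)
        (blockStart φ x i0 - (w.length : ℤ)) := by
      refine occursAt_append_combine (w_occurs_at_block hret hz i0) ?_
      rw [show blockStart φ x i0 - (w.length : ℤ) + (w.length : ℤ)
        = blockStart φ x i0 by ring]
      exact fword_occurs hz i0 u.length
    have hvne : w ++ fword φ x i0 u.length ≠ [] := by
      intro hcon
      exact hret.1 (List.append_eq_nil_iff.mp hcon).1
    obtain ⟨q, hq, p, hpΓ, hp1, hp2⟩ :=
      hΓ (w ++ fword φ x i0 u.length) hvne ⟨_, hv⟩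
    rw [Set.mem_Icc] at hpΓ
    have hwq : occursAt z w q := (occursAt_append_split hq).1
    obtain ⟨j, hj⟩ := occ_is_block hret hz hwq
    have hFj : occursAt z (fword φ x i0 u.length) (blockStart φ x j) := by
      have h1 := (occursAt_append_split hq).2
      rw [show q + ((w.length : ℕ) : ℤ) = blockStart φ x j by omega] at h1
      exact h1
    have hxs := desubst hret hz u.length i0 j hFj
    have hufin : occursAt x u j := by
      have h1 : subwordZ x j u.length = subwordZ x i0 u.length := by
        rw [subwordZ_def', subwordZ_def']
        refine List.map_congr_left fun t htr => ?_
        exact hxs t (List.mem_range.mp htr)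
      exact h1.trans hi0
    obtain ⟨ip, hip1, hip2⟩ := exists_block φ x hφ p
    have hipm1 : m ≤ ip := by
      by_contra hcon
      push_neg at hcon
      have := blockStart_mono φ x hφ (show ip + 1 ≤ m by omega)
      omega
    have hipm2 : ip ≤ m' := by
      by_contra hcon
      push_neg at hcon
      have := blockStart_mono φ x hφ (show m' + 1 ≤ ip by omega)
      omega
    have hlenF := fword_length φ x i0 u.length
    have hlenFj := fword_length φ x j u.length
    have hFeq : fword φ x j u.length = fword φ x i0 u.length :=
      fword_congr φ x (fun t htlt => hxs t htlt)
    have hlenFj' : ((fword φ x i0 u.length).length : ℤ)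
        = blockStart φ x (j + (u.length : ℤ)) - blockStart φ x j := by
      rw [← hFeq]
      exact hlenFj
    have hlv : ((w ++ fword φ x i0 u.length).length : ℤ)
        = (w.length : ℤ) + ((fword φ x i0 u.length).length : ℤ) := by
      rw [List.length_append]
      push_cast
      ring
    have hp2' : p < blockStart φ x (j + (u.length : ℤ)) := by omega
    have hiplt : ip < j + (u.length : ℤ) := by
      by_contra hcon
      push_neg at hcon
      have := blockStart_mono φ x hφ hcon
      omega
    have hjle : j ≤ ip + (w.length : ℤ) := by
      by_contra hcon
      push_neg at hcon
      have := blockStart_le_of_le φ x hφ (show ip + 1 ≤ j by omega)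
      omega
    refine ⟨j, hufin, max j m, ?_, le_max_left _ _, ?_⟩
    · rw [Set.mem_Icc]
      omega
    · omega
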